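/- arXiv:2304.08342 — 3 statements merged into one kernel-verified Lean document; each statement's English description precedes it below -/
import Mathlib

section
/- Let b_λ(x) = ∇ log p(y|x) + α ∇ log q_θ(x) + (Π_C(x) − x)/λ, where ∇ log q_θ is L-Lipschitz, ∇ log p(y|·) satisfies ⟨∇log p(y|x₂) − ∇log p(y|x₁), x₂ − x₁⟩ ≤ −m_y‖x₂ − x₁‖², and 2λ(αL − m_y) ≤ 1. Then for all x₁, x₂ ∈ ℝ^d, ⟨b_λ(x₁) − b_λ(x₂), x₁ − x₂⟩ ≤ −‖x₁ − x₂‖²/(2λ) + R_C‖x₁ − x₂‖/λ, where R_C = sup{‖u − v‖ : u, v ∈ C}. In particular, if ‖x₁ − x₂‖ ≥ 4R_C then ⟨b_λ(x₁) − b_λ(x₂), x₁ − x₂⟩ ≤ −‖x₁ − x₂‖²/(4λ). -/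
/-- one-sided contractivity of the NF-ULA drift
`b_λ(x) = ∇log p(y|x) + α ∇log q_θ(x) + (Π_C x - x)/λ`. -/
theorem stmt7 {d : ℕ} (f g : EuclideanSpace ℝ (Fin d) → EuclideanSpace ℝ (Fin d))
    (L α lam my RC : ℝ) (hL : 0 ≤ L) (hα : 0 < α) (hlam : 0 < lam)
    (hgLip : ∀ x y, ‖g x - g y‖ ≤ L * ‖x - y‖)
    (hf : ∀ x₁ x₂, (inner ℝ (f x₂ - f x₁) (x₂ - x₁) : ℝ) ≤ -my * ‖x₂ - x₁‖ ^ 2)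
    (hcond : 2 * lam * (α * L - my) ≤ 1)
    (C : Set (EuclideanSpace ℝ (Fin d)))
    (hconv : Convex ℝ C) (hcomp : IsCompact C) (hne : C.Nonempty)
    (hRC : ∀ u ∈ C, ∀ v ∈ C, ‖u - v‖ ≤ RC) (hRC0 : 0 ≤ RC)
    (proj : EuclideanSpace ℝ (Fin d) → EuclideanSpace ℝ (Fin d))
    (hproj : ∀ x, proj x ∈ C ∧ ∀ z ∈ C, ‖x - proj x‖ ≤ ‖x - z‖)
    (b : EuclideanSpace ℝ (Fin d) → EuclideanSpace ℝ (Fin d))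
    (hb : ∀ x, b x = f x + α • g x + (1 / lam) • (proj x - x)) :
    (∀ x₁ x₂, (inner ℝ (b x₁ - b x₂) (x₁ - x₂) : ℝ) ≤
      -‖x₁ - x₂‖ ^ 2 / (2 * lam) + RC * ‖x₁ - x₂‖ / lam) ∧
    (∀ x₁ x₂, 4 * RC ≤ ‖x₁ - x₂‖ →
      (inner ℝ (b x₁ - b x₂) (x₁ - x₂) : ℝ) ≤ -‖x₁ - x₂‖ ^ 2 / (4 * lam)) := by
  have key : ∀ x₁ x₂, (inner ℝ (b x₁ - b x₂) (x₁ - x₂) : ℝ) ≤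
      -‖x₁ - x₂‖ ^ 2 / (2 * lam) + RC * ‖x₁ - x₂‖ / lam := by
    intro x₁ x₂
    set n := ‖x₁ - x₂‖ with hn
    have hn0 : 0 ≤ n := norm_nonneg _
    have hdecomp : b x₁ - b x₂ = (f x₁ - f x₂) + α • (g x₁ - g x₂)
        + (1 / lam) • ((proj x₁ - proj x₂) - (x₁ - x₂)) := by
      rw [hb x₁, hb x₂]; module
    have hinner : (inner ℝ (b x₁ - b x₂) (x₁ - x₂) : ℝ)
        = inner ℝ (f x₁ - f x₂) (x₁ - x₂)
          + α * inner ℝ (g x₁ - g x₂) (x₁ - x₂)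
          + (1 / lam) * (inner ℝ (proj x₁ - proj x₂) (x₁ - x₂)
              - inner ℝ (x₁ - x₂) (x₁ - x₂)) := by
      rw [hdecomp]
      simp only [inner_add_left, inner_sub_left, real_inner_smul_left]
    have h1 : (inner ℝ (f x₁ - f x₂) (x₁ - x₂) : ℝ) ≤ -my * n ^ 2 := hf x₂ x₁
    have h2 : (inner ℝ (g x₁ - g x₂) (x₁ - x₂) : ℝ) ≤ L * n * n := by
      calc (inner ℝ (g x₁ - g x₂) (x₁ - x₂) : ℝ) ≤ ‖g x₁ - g x₂‖ * n :=
            real_inner_le_norm _ _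
        _ ≤ L * n * n := by
            have := hgLip x₁ x₂
            nlinarith
    have h3 : (inner ℝ (proj x₁ - proj x₂) (x₁ - x₂) : ℝ) ≤ RC * n := by
      calc (inner ℝ (proj x₁ - proj x₂) (x₁ - x₂) : ℝ) ≤ ‖proj x₁ - proj x₂‖ * n :=
            real_inner_le_norm _ _
        _ ≤ RC * n := by
            have := hRC (proj x₁) (hproj x₁).1 (proj x₂) (hproj x₂).1
            nlinarith
    have h4 : (inner ℝ (x₁ - x₂) (x₁ - x₂) : ℝ) = n ^ 2 :=
      real_inner_self_eq_norm_sq _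
    rw [hinner, h4]
    have hlam' : (0:ℝ) < 1 / lam := by positivity
    have hb2 : α * (inner ℝ (g x₁ - g x₂) (x₁ - x₂) : ℝ) ≤ α * (L * n * n) :=
      mul_le_mul_of_nonneg_left h2 hα.le
    have hb3 : (1/lam) * ((inner ℝ (proj x₁ - proj x₂) (x₁ - x₂) : ℝ) - n ^ 2)
        ≤ (1/lam) * (RC * n - n ^ 2) := by
      apply mul_le_mul_of_nonneg_left _ hlam'.le
      linarith
    have hA : -my * n ^ 2 + α * (L * n * n) ≤ n ^ 2 / (2 * lam) := by
      rw [le_div_iff₀ (by positivity)]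
      nlinarith [mul_le_mul_of_nonneg_right hcond (sq_nonneg n)]
    have e1 : (1/lam) * (RC * n - n ^ 2) = RC * n / lam - n ^ 2 / lam := by
      field_simp
    have e2 : -n ^ 2 / (2 * lam) = n ^ 2 / (2 * lam) - n ^ 2 / lam := by
      field_simp; ring
    linarith
  refine ⟨key, fun x₁ x₂ h4RC => ?_⟩
  have hkey := key x₁ x₂
  have hn0 : 0 ≤ ‖x₁ - x₂‖ := norm_nonneg _
  have h5 : RC * ‖x₁ - x₂‖ / lam ≤ ‖x₁ - x₂‖ ^ 2 / (4 * lam) := by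
    rw [div_le_div_iff₀ hlam (by positivity)]
    nlinarith [mul_le_mul_of_nonneg_right (mul_le_mul_of_nonneg_right h4RC hn0) hlam.le]
  have h2 : -‖x₁ - x₂‖ ^ 2 / (2 * lam) + ‖x₁ - x₂‖ ^ 2 / (4 * lam)
      = -‖x₁ - x₂‖ ^ 2 / (4 * lam) := by field_simp; ring
  linarith
end

section
/- Let μ, ν be probability measures on ℝ^d and V : ℝ^d → [1, ∞) measurable. Then the V-norm of μ − ν satisfies ‖μ − ν‖_V ≤ ‖μ − ν‖_{TV}^{1/2} · (μ[V²] + ν[V²])^{1/2}, where ‖ξ‖_V = sup_{‖f‖_V ≤ 1} |∫ f dξ| and ‖f‖_V = sup_x |f(x)|/V(x). -/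
open MeasureTheory

/-- `‖μ - ν‖_V ≤ ‖μ - ν‖_TV^{1/2} (μ[V²] + ν[V²])^{1/2}`, with the `V`-norm and
the TV norm expressed as suprema over measurable test functions dominated by `V`
(respectively by `1`). -/
theorem stmt9 {d : ℕ} (μ ν : Measure (EuclideanSpace ℝ (Fin d)))
    [IsProbabilityMeasure μ] [IsProbabilityMeasure ν]
    (V : EuclideanSpace ℝ (Fin d) → ℝ) (hVmeas : Measurable V) (hV1 : ∀ x, 1 ≤ V x)
    (hV2μ : Integrable (fun x => V x ^ 2) μ) (hV2ν : Integrable (fun x => V x ^ 2) ν) :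
    (⨆ f : {f : EuclideanSpace ℝ (Fin d) → ℝ // Measurable f ∧ ∀ x, |f x| ≤ V x},
        |∫ x, f.1 x ∂μ - ∫ x, f.1 x ∂ν|) ≤
      Real.sqrt (⨆ f : {f : EuclideanSpace ℝ (Fin d) → ℝ // Measurable f ∧ ∀ x, |f x| ≤ 1},
          |∫ x, f.1 x ∂μ - ∫ x, f.1 x ∂ν|) *
        Real.sqrt ((∫ x, V x ^ 2 ∂μ) + ∫ x, V x ^ 2 ∂ν) := by
  set ρ : Measure (EuclideanSpace ℝ (Fin d)) := μ + ν with hρ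
  have hμρ : μ ≪ ρ := Measure.absolutelyContinuous_of_le (Measure.le_add_right le_rfl)
  have hνρ : ν ≪ ρ := Measure.absolutelyContinuous_of_le (Measure.le_add_left le_rfl)
  haveI : IsFiniteMeasure ρ := inferInstanceAs (IsFiniteMeasure (μ + ν))
  haveI : μ.HaveLebesgueDecomposition ρ := Measure.haveLebesgueDecomposition_of_sigmaFinite (μ := μ) (ν := ρ)
  haveI : ν.HaveLebesgueDecomposition ρ := Measure.haveLebesgueDecomposition_of_sigmaFinite (μ := ν) (ν := ρ)
  -- the signed density h = dμ/dρ − dν/dρ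
  set h : EuclideanSpace ℝ (Fin d) → ℝ := fun x => (μ.rnDeriv ρ x).toReal - (ν.rnDeriv ρ x).toReal with hh_def
  have hh_meas : Measurable h :=
    (Measure.measurable_rnDeriv μ ρ).ennreal_toReal.sub
      (Measure.measurable_rnDeriv ν ρ).ennreal_toReal
  -- |h| ≤ 1 a.e.
  have hh1 : ∀ᵐ x ∂ρ, |h x| ≤ 1 := by
    have h1 : (μ + ν).rnDeriv ρ =ᵐ[ρ] μ.rnDeriv ρ + ν.rnDeriv ρ := Measure.rnDeriv_add μ ν ρ
    have h2 : ρ.rnDeriv ρ =ᵐ[ρ] fun _ => 1 := Measure.rnDeriv_self ρ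
    have h3 : ∀ᵐ x ∂ρ, μ.rnDeriv ρ x < ⊤ := Measure.rnDeriv_lt_top μ ρ
    have h4 : ∀ᵐ x ∂ρ, ν.rnDeriv ρ x < ⊤ := Measure.rnDeriv_lt_top ν ρ
    filter_upwards [h1, h2, h3, h4] with x hx1 hx2 hx3 hx4
    have hsum : μ.rnDeriv ρ x + ν.rnDeriv ρ x = 1 := by
      rw [Pi.add_apply] at hx1
      rw [← hx1, hx2]
    have hsum' : (μ.rnDeriv ρ x).toReal + (ν.rnDeriv ρ x).toReal = 1 := by
      rw [← ENNReal.toReal_add hx3.ne hx4.ne, hsum, ENNReal.toReal_one]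
    have hp : 0 ≤ (μ.rnDeriv ρ x).toReal := ENNReal.toReal_nonneg
    have hq : 0 ≤ (ν.rnDeriv ρ x).toReal := ENNReal.toReal_nonneg
    rw [abs_le]; constructor <;> simp only [hh_def] <;> nlinarith
  -- integrability facts
  have hV2ρ : Integrable (fun x => V x ^ 2) ρ := hV2μ.add_measure hV2ν
  have hVle : ∀ x, V x ≤ V x ^ 2 := fun x => by nlinarith [hV1 x]
  have hint_f : ∀ (f : EuclideanSpace ℝ (Fin d) → ℝ), Measurable f → (∀ x, |f x| ≤ V x) →
      ∀ (m : Measure (EuclideanSpace ℝ (Fin d))), Integrable (fun x => V x ^ 2) m → Integrable f m := by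
    intro f hf hfV m hm
    exact hm.mono' hf.aestronglyMeasurable
      (Filter.Eventually.of_forall fun x => by
        rw [Real.norm_eq_abs]; exact (hfV x).trans (hVle x))
  -- key identity : ∫ f dμ − ∫ f dν = ∫ f·h dρ
  have hkey : ∀ (f : EuclideanSpace ℝ (Fin d) → ℝ), Measurable f → (∀ x, |f x| ≤ V x) →
      (∫ x, f x ∂μ) - (∫ x, f x ∂ν) = ∫ x, f x * h x ∂ρ := by
    intro f hf hfV
    have h1 : ∫ x, (μ.rnDeriv ρ x).toReal • f x ∂ρ = ∫ x, f x ∂μ :=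
      MeasureTheory.integral_rnDeriv_smul hμρ
    have h2 : ∫ x, (ν.rnDeriv ρ x).toReal • f x ∂ρ = ∫ x, f x ∂ν :=
      MeasureTheory.integral_rnDeriv_smul hνρ
    have hi1 : Integrable (fun x => (μ.rnDeriv ρ x).toReal • f x) ρ :=
      (MeasureTheory.integrable_rnDeriv_smul_iff hμρ).mpr (hint_f f hf hfV μ hV2μ)
    have hi2 : Integrable (fun x => (ν.rnDeriv ρ x).toReal • f x) ρ :=
      (MeasureTheory.integrable_rnDeriv_smul_iff hνρ).mpr (hint_f f hf hfV ν hV2ν)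
    rw [← h1, ← h2, ← integral_sub hi1 hi2]
    congr 1; ext x; simp [hh_def, smul_eq_mul]; ring
  -- T = ∫ |h| dρ
  set T : ℝ := ∫ x, |h x| ∂ρ with hT_def
  have hh_int : Integrable h ρ :=
    Integrable.mono' (integrable_const 1) hh_meas.aestronglyMeasurable
      (by filter_upwards [hh1] with x hx; rwa [Real.norm_eq_abs])
  have hT_nonneg : 0 ≤ T := integral_nonneg fun x => abs_nonneg _
  -- the TV-type supremum
  set S : ℝ := ⨆ f : {f : EuclideanSpace ℝ (Fin d) → ℝ // Measurable f ∧ ∀ x, |f x| ≤ 1},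
      |∫ x, f.1 x ∂μ - ∫ x, f.1 x ∂ν| with hS_def
  have hSbdd : BddAbove (Set.range fun f : {f : EuclideanSpace ℝ (Fin d) → ℝ // Measurable f ∧ ∀ x, |f x| ≤ 1} =>
      |∫ x, f.1 x ∂μ - ∫ x, f.1 x ∂ν|) := by
    refine ⟨2, ?_⟩
    rintro s ⟨f, rfl⟩
    have hb : ∀ (m : Measure (EuclideanSpace ℝ (Fin d))) [IsProbabilityMeasure m], |∫ x, f.1 x ∂m| ≤ 1 := by
      intro m _
      calc |∫ x, f.1 x ∂m| ≤ ∫ x, |f.1 x| ∂m := by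
            simpa [Real.norm_eq_abs] using norm_integral_le_integral_norm (μ := m) f.1
        _ ≤ ∫ _x, (1 : ℝ) ∂m := by
            refine integral_mono_of_nonneg (Filter.Eventually.of_forall fun x => abs_nonneg _)
              (integrable_const 1) (Filter.Eventually.of_forall fun x => f.2.2 x)
        _ = 1 := by simp
    calc |∫ x, f.1 x ∂μ - ∫ x, f.1 x ∂ν| ≤ |∫ x, f.1 x ∂μ| + |∫ x, f.1 x ∂ν| := abs_sub _ _
      _ ≤ 1 + 1 := add_le_add (hb μ) (hb ν)
      _ = 2 := by norm_num
  -- T ≤ S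
  have hTS : T ≤ S := by
    set f₀ : EuclideanSpace ℝ (Fin d) → ℝ := fun x => if 0 ≤ h x then 1 else -1 with hf₀_def
    have hf₀_meas : Measurable f₀ :=
      Measurable.ite (measurableSet_le measurable_const hh_meas) measurable_const measurable_const
    have hf₀_le : ∀ x, |f₀ x| ≤ 1 := fun x => by
      simp only [hf₀_def]; split <;> simp
    have hf₀V : ∀ x, |f₀ x| ≤ V x := fun x => (hf₀_le x).trans (hV1 x)
    have heq : (∫ x, f₀ x ∂μ) - (∫ x, f₀ x ∂ν) = T := by
      rw [hkey f₀ hf₀_meas hf₀V, hT_def]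
      congr 1; ext x
      simp only [hf₀_def]
      split <;> rename_i hx
      · rw [abs_of_nonneg hx]; ring
      · rw [abs_of_neg (not_le.mp hx)]; ring
    have : T ≤ |∫ x, f₀ x ∂μ - ∫ x, f₀ x ∂ν| := by rw [heq]; exact le_abs_self T
    exact this.trans (le_ciSup hSbdd ⟨f₀, hf₀_meas, hf₀_le⟩)
  -- A = ∫ V² dρ
  have hA_eq : ∫ x, V x ^ 2 ∂ρ = (∫ x, V x ^ 2 ∂μ) + ∫ x, V x ^ 2 ∂ν :=
    integral_add_measure hV2μ hV2ν
  have hA_nonneg : 0 ≤ ∫ x, V x ^ 2 ∂ρ := integral_nonneg fun x => sq_nonneg _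
  -- main bound for each test function f
  have hmain : ∀ (f : EuclideanSpace ℝ (Fin d) → ℝ), Measurable f → (∀ x, |f x| ≤ V x) →
      |∫ x, f x ∂μ - ∫ x, f x ∂ν| ≤ Real.sqrt T * Real.sqrt (∫ x, V x ^ 2 ∂ρ) := by
    intro f hf hfV
    rw [hkey f hf hfV]
    have hfh_int : Integrable (fun x => f x * h x) ρ :=
      Integrable.mono' hV2ρ (hf.mul hh_meas).aestronglyMeasurable
        (by filter_upwards [hh1] with x hx
            rw [Real.norm_eq_abs, abs_mul]
            calc |f x| * |h x| ≤ V x * 1 :=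
                  mul_le_mul (hfV x) hx (abs_nonneg _) ((abs_nonneg (f x)).trans (hfV x))
              _ = V x := mul_one _
              _ ≤ V x ^ 2 := hVle x)
    have h1 : |∫ x, f x * h x ∂ρ| ≤ ∫ x, |f x * h x| ∂ρ := by
      simpa [Real.norm_eq_abs, abs_mul] using norm_integral_le_integral_norm (μ := ρ) fun x => f x * h x
    refine h1.trans ?_
    -- Cauchy-Schwarz with g₁ = |f|·√|h|, g₂ = √|h|
    set g₁ : EuclideanSpace ℝ (Fin d) → ℝ := fun x => |f x| * Real.sqrt |h x| with hg₁_def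
    set g₂ : EuclideanSpace ℝ (Fin d) → ℝ := fun x => Real.sqrt |h x| with hg₂_def
    have hg₁_meas : Measurable g₁ := hf.abs.mul hh_meas.abs.sqrt
    have hg₂_meas : Measurable g₂ := hh_meas.abs.sqrt
    have hg₁_sq : ∀ x, g₁ x ^ 2 = f x ^ 2 * |h x| := fun x => by
      simp only [hg₁_def]
      rw [mul_pow, Real.sq_sqrt (abs_nonneg _), sq_abs]
    have hg₂_sq : ∀ x, g₂ x ^ 2 = |h x| := fun x => by
      simp only [hg₂_def]; rw [Real.sq_sqrt (abs_nonneg _)]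
    have hg₁sq_int : Integrable (fun x => g₁ x ^ 2) ρ := by
      refine Integrable.mono' hV2ρ (hg₁_meas.pow_const 2).aestronglyMeasurable ?_
      filter_upwards [hh1] with x hx
      rw [Real.norm_eq_abs, abs_of_nonneg (sq_nonneg _), hg₁_sq]
      calc f x ^ 2 * |h x| ≤ V x ^ 2 * 1 := by
            refine mul_le_mul ?_ hx (abs_nonneg _) (sq_nonneg _)
            rw [← sq_abs]; exact pow_le_pow_left₀ (abs_nonneg _) (hfV x) 2
        _ = V x ^ 2 := mul_one _
    have hg₂sq_int : Integrable (fun x => g₂ x ^ 2) ρ := by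
      simp only [hg₂_sq]; exact hh_int.abs
    have hg₁_mem : MemLp g₁ 2 ρ :=
      (memLp_two_iff_integrable_sq hg₁_meas.aestronglyMeasurable).mpr hg₁sq_int
    have hg₂_mem : MemLp g₂ 2 ρ :=
      (memLp_two_iff_integrable_sq hg₂_meas.aestronglyMeasurable).mpr hg₂sq_int
    have hCS := integral_mul_le_Lp_mul_Lq_of_nonneg Real.HolderConjugate.two_two (μ := ρ)
      (Filter.Eventually.of_forall fun x => mul_nonneg (abs_nonneg _) (Real.sqrt_nonneg _))
      (Filter.Eventually.of_forall fun x => Real.sqrt_nonneg _)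
      (by rw [show ENNReal.ofReal (2:ℝ) = 2 by norm_num]; exact hg₁_mem)
      (by rw [show ENNReal.ofReal (2:ℝ) = 2 by norm_num]; exact hg₂_mem)
    have habs_eq : ∀ x, |f x * h x| = g₁ x * g₂ x := fun x => by
      simp only [hg₁_def, hg₂_def]
      rw [abs_mul, mul_assoc, Real.mul_self_sqrt (abs_nonneg _)]
    calc ∫ x, |f x * h x| ∂ρ = ∫ x, g₁ x * g₂ x ∂ρ := by simp only [habs_eq]
      _ ≤ (∫ x, g₁ x ^ (2:ℝ) ∂ρ) ^ (1/2 : ℝ) * (∫ x, g₂ x ^ (2:ℝ) ∂ρ) ^ (1/2 : ℝ) := hCS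
      _ = Real.sqrt (∫ x, g₁ x ^ 2 ∂ρ) * Real.sqrt (∫ x, g₂ x ^ 2 ∂ρ) := by
          have hrp : ∀ y : ℝ, y ^ (2:ℝ) = y ^ (2:ℕ) := fun y => by
            rw [show (2:ℝ) = ((2:ℕ):ℝ) by norm_num, Real.rpow_natCast]
          simp_rw [hrp]
          rw [Real.sqrt_eq_rpow, Real.sqrt_eq_rpow]
      _ ≤ Real.sqrt (∫ x, V x ^ 2 ∂ρ) * Real.sqrt T := by
          gcongr Real.sqrt ?_ * Real.sqrt ?_
          · refine integral_mono_of_nonneg (Filter.Eventually.of_forall fun x => sq_nonneg _)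
              hV2ρ ?_
            filter_upwards [hh1] with x hx
            rw [hg₁_sq]
            calc f x ^ 2 * |h x| ≤ V x ^ 2 * 1 := by
                  refine mul_le_mul ?_ hx (abs_nonneg _) (sq_nonneg _)
                  rw [← sq_abs]; exact pow_le_pow_left₀ (abs_nonneg _) (hfV x) 2
              _ = V x ^ 2 := mul_one _
          · refine le_of_eq ?_
            rw [hT_def]; congr 1; ext x; rw [hg₂_sq]
      _ = Real.sqrt T * Real.sqrt (∫ x, V x ^ 2 ∂ρ) := mul_comm _ _
  -- conclude by taking the supremum
  rw [← hA_eq]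
  haveI : Nonempty {f : EuclideanSpace ℝ (Fin d) → ℝ // Measurable f ∧ ∀ x, |f x| ≤ V x} :=
    ⟨⟨fun _ => 0, measurable_const, fun x => by
      simpa using zero_le_one.trans (hV1 x)⟩⟩
  refine ciSup_le fun f => ?_
  refine (hmain f.1 f.2.1 f.2.2).trans ?_
  gcongr
end

section
/- Suppose there exist continuous Φ₁ : ℝ^d → [0,∞) and Φ₂ : ℝ^m → [0,∞) with |log p(y₁|x) − log p(y₂|x)| ≤ (Φ₁(x) + Φ₂(y₁) + Φ₂(y₂))‖y₁ − y₂‖ for all x, y₁, y₂, and that ∫(1 + Φ₁(x)) exp[c₀Φ₁(x) − ι_C^{(λ)}(x)] q_θ(x)^α dx < ∞ for all c₀ > 0, with q_θ bounded and p(y|·) bounded and positive. Then the map y ↦ π_{λ,y}, where π_{λ,y} has density proportional to p(y|x) q_θ(x)^α exp(−ι_C^{(λ)}(x)), is locally Lipschitz in total variation: for every compact K ⊂ ℝ^m there is M_K ≥ 0 with ‖π_{λ,y₁} − π_{λ,y₂}‖_{TV} ≤ M_K‖y₁ − y₂‖ for all y₁, y₂ ∈ K. -/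
open MeasureTheory

lemma aux_abs_exp_sub_one {t s : ℝ} (h : |t| ≤ s) : |Real.exp t - 1| ≤ |t| * Real.exp s := by
  have hs : 0 ≤ s := (abs_nonneg t).trans h
  have key : |Real.exp t - 1| ≤ |t| * Real.exp |t| := by
    rcases le_or_gt 0 t with ht | ht
    · rw [abs_of_nonneg ht,
        abs_of_nonneg (by nlinarith [Real.one_le_exp ht] : (0:ℝ) ≤ Real.exp t - 1)]
      have h1 := Real.add_one_le_exp (-t)
      have h2 := Real.exp_pos t
      have h3 : Real.exp (-t) * Real.exp t = 1 := by rw [← Real.exp_add]; simp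
      nlinarith
    · have he : Real.exp t < 1 := by
        rw [show (1:ℝ) = Real.exp 0 by simp]
        exact Real.exp_lt_exp.2 ht
      rw [abs_of_neg ht, abs_of_neg (by linarith : Real.exp t - 1 < 0)]
      have h1 := Real.add_one_le_exp t
      have h2 := Real.one_le_exp (by linarith : (0:ℝ) ≤ -t)
      nlinarith
  exact key.trans (mul_le_mul_of_nonneg_left (Real.exp_le_exp.2 h) (abs_nonneg t))

set_option maxHeartbeats 1000000 in
/-- local Lipschitz continuity in `y`, in total variation (expressed as the
`L¹` distance of the Lebesgue densities), of the posterior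
`π_{λ,y}(dx) ∝ p(y|x) q_θ(x)^α exp(-ι_C^{(λ)}(x)) dx`. -/
theorem stmt12 {d m : ℕ}
    (p : EuclideanSpace ℝ (Fin m) → EuclideanSpace ℝ (Fin d) → ℝ)
    (q : EuclideanSpace ℝ (Fin d) → ℝ)
    (α lam : ℝ) (hα : 0 < α) (hlam : 0 < lam)
    (C : Set (EuclideanSpace ℝ (Fin d)))
    (hconv : Convex ℝ C) (hcomp : IsCompact C) (hne : C.Nonempty)
    (proj : EuclideanSpace ℝ (Fin d) → EuclideanSpace ℝ (Fin d))
    (hproj : ∀ x, proj x ∈ C ∧ ∀ z ∈ C, ‖x - proj x‖ ≤ ‖x - z‖)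
    (hq_pos : ∀ x, 0 < q x) (hq_bdd : ∃ M : ℝ, ∀ x, q x ≤ M) (hq_cont : Continuous q)
    (hp_pos : ∀ y x, 0 < p y x) (hp_bdd : ∀ y, ∃ M : ℝ, ∀ x, p y x ≤ M)
    (hp_smooth : ∀ y, ContDiff ℝ 1 (p y))
    (Φ₁ : EuclideanSpace ℝ (Fin d) → ℝ) (Φ₂ : EuclideanSpace ℝ (Fin m) → ℝ)
    (hΦ₁cont : Continuous Φ₁) (hΦ₁nonneg : ∀ x, 0 ≤ Φ₁ x)
    (hΦ₂cont : Continuous Φ₂) (hΦ₂nonneg : ∀ y, 0 ≤ Φ₂ y)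
    (hloglip : ∀ x y₁ y₂, |Real.log (p y₁ x) - Real.log (p y₂ x)| ≤
      (Φ₁ x + Φ₂ y₁ + Φ₂ y₂) * ‖y₁ - y₂‖)
    (hint : ∀ c₀ : ℝ, 0 < c₀ → Integrable (fun x : EuclideanSpace ℝ (Fin d) =>
      (1 + Φ₁ x) * Real.exp (c₀ * Φ₁ x - ‖x - proj x‖ ^ 2 / (2 * lam)) * q x ^ α)) :
    ∀ K : Set (EuclideanSpace ℝ (Fin m)), IsCompact K →
      ∃ MK : ℝ, 0 ≤ MK ∧ ∀ y₁ ∈ K, ∀ y₂ ∈ K,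
        (∫ x : EuclideanSpace ℝ (Fin d),
          |p y₁ x * q x ^ α * Real.exp (-‖x - proj x‖ ^ 2 / (2 * lam)) /
              (∫ x' : EuclideanSpace ℝ (Fin d),
                p y₁ x' * q x' ^ α * Real.exp (-‖x' - proj x'‖ ^ 2 / (2 * lam))) -
            p y₂ x * q x ^ α * Real.exp (-‖x - proj x‖ ^ 2 / (2 * lam)) /
              (∫ x' : EuclideanSpace ℝ (Fin d),
                p y₂ x' * q x' ^ α * Real.exp (-‖x' - proj x'‖ ^ 2 / (2 * lam)))|) ≤
          MK * ‖y₁ - y₂‖ := by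
  intro K hK
  rcases K.eq_empty_or_nonempty with hKe | ⟨y₀, hy₀⟩
  · subst hKe
    exact ⟨0, le_rfl, fun y₁ h₁ => absurd h₁ (Set.notMem_empty _)⟩
  -- the norm to the projection is the distance to C
  have hnorm : ∀ x : EuclideanSpace ℝ (Fin d), ‖x - proj x‖ = Metric.infDist x C := by
    intro x
    obtain ⟨hmem, hmin⟩ := hproj x
    refine le_antisymm ?_ (by simpa [dist_eq_norm] using Metric.infDist_le_dist_of_mem hmem)
    by_contra hlt
    push_neg at hlt
    obtain ⟨z, hz, hdz⟩ := (Metric.infDist_lt_iff hne).1 hlt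
    rw [dist_eq_norm] at hdz
    exact absurd (hmin z hz) (by linarith)
  -- continuity of the basic factors
  have hr_cont : Continuous fun x : EuclideanSpace ℝ (Fin d) =>
      Real.exp (-‖x - proj x‖ ^ 2 / (2 * lam)) := by
    have heq : (fun x : EuclideanSpace ℝ (Fin d) => Real.exp (-‖x - proj x‖ ^ 2 / (2 * lam)))
        = fun x => Real.exp (-Metric.infDist x C ^ 2 / (2 * lam)) := by
      funext x; rw [hnorm]
    rw [heq]
    exact Real.continuous_exp.comp
      ((((Metric.continuous_infDist_pt C).pow 2).neg).div_const _)
  have hqα : Continuous fun x : EuclideanSpace ℝ (Fin d) => q x ^ α :=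
    hq_cont.rpow_const fun x => Or.inl (hq_pos x).ne'
  -- the unnormalized density
  set g : EuclideanSpace ℝ (Fin m) → EuclideanSpace ℝ (Fin d) → ℝ :=
    fun y x => p y x * q x ^ α * Real.exp (-‖x - proj x‖ ^ 2 / (2 * lam)) with hg_def
  have hgpos : ∀ y x, 0 < g y x := fun y x =>
    mul_pos (mul_pos (hp_pos y x) (Real.rpow_pos_of_pos (hq_pos x) α)) (Real.exp_pos _)
  have hgcont : ∀ y, Continuous (g y) := fun y =>
    ((hp_smooth y).continuous.mul hqα).mul hr_cont
  -- bounds from compactness of K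
  obtain ⟨B₀, hB₀⟩ := hK.exists_bound_of_continuousOn hΦ₂cont.continuousOn
  set B := max B₀ 0 with hB
  have hB0 : 0 ≤ B := le_max_right _ _
  have hBK : ∀ y ∈ K, Φ₂ y ≤ B := fun y hy =>
    (le_abs_self _).trans ((Real.norm_eq_abs (Φ₂ y) ▸ hB₀ y hy).trans (le_max_left _ _))
  obtain ⟨D₀, hD₀⟩ := Metric.isBounded_iff.1 hK.isBounded
  set D := max D₀ 0 with hD
  have hD0 : 0 ≤ D := le_max_right _ _
  have hDK : ∀ y₁ ∈ K, ∀ y₂ ∈ K, ‖y₁ - y₂‖ ≤ D := fun y₁ h₁ y₂ h₂ => by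
    rw [← dist_eq_norm]; exact (hD₀ h₁ h₂).trans (le_max_left _ _)
  -- log-Lipschitz bound on K
  have hlogK : ∀ y₁ ∈ K, ∀ y₂ ∈ K, ∀ x, |Real.log (p y₁ x) - Real.log (p y₂ x)| ≤
      (Φ₁ x + 2 * B) * ‖y₁ - y₂‖ := by
    intro y₁ h₁ y₂ h₂ x
    refine (hloglip x y₁ y₂).trans (mul_le_mul_of_nonneg_right ?_ (norm_nonneg _))
    linarith [hBK y₁ h₁, hBK y₂ h₂]
  -- ratio bound on K
  have hratio : ∀ y₁ ∈ K, ∀ y₂ ∈ K, ∀ x,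
      p y₁ x ≤ p y₂ x * Real.exp ((Φ₁ x + 2 * B) * D) := by
    intro y₁ h₁ y₂ h₂ x
    have h2 := (le_abs_self _).trans (hlogK y₁ h₁ y₂ h₂ x)
    have h3 : (Φ₁ x + 2 * B) * ‖y₁ - y₂‖ ≤ (Φ₁ x + 2 * B) * D :=
      mul_le_mul_of_nonneg_left (hDK y₁ h₁ y₂ h₂) (by linarith [hΦ₁nonneg x])
    have h1 : Real.log (p y₁ x) ≤ Real.log (p y₂ x) + (Φ₁ x + 2 * B) * D := by linarith
    have h4 := Real.exp_le_exp.2 h1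
    rwa [Real.exp_log (hp_pos y₁ x), Real.exp_add, Real.exp_log (hp_pos y₂ x)] at h4
  -- bound on p y₀
  obtain ⟨M₀, hM₀⟩ := hp_bdd y₀
  have hM0pos : 0 < M₀ := (hp_pos y₀ 0).trans_le (hM₀ 0)
  -- pointwise Lipschitz bound on p over K
  have hdiff : ∀ y₁ ∈ K, ∀ y₂ ∈ K, ∀ x, |p y₁ x - p y₂ x| ≤
      p y₂ x * ((Φ₁ x + 2 * B) * Real.exp ((Φ₁ x + 2 * B) * D)) * ‖y₁ - y₂‖ := by
    intro y₁ h₁ y₂ h₂ x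
    set t := Real.log (p y₁ x) - Real.log (p y₂ x) with ht
    have htle : |t| ≤ (Φ₁ x + 2 * B) * ‖y₁ - y₂‖ := hlogK y₁ h₁ y₂ h₂ x
    have hsle : (Φ₁ x + 2 * B) * ‖y₁ - y₂‖ ≤ (Φ₁ x + 2 * B) * D :=
      mul_le_mul_of_nonneg_left (hDK y₁ h₁ y₂ h₂) (by linarith [hΦ₁nonneg x])
    have hkey := aux_abs_exp_sub_one (htle.trans hsle)
    have hpt : p y₁ x = p y₂ x * Real.exp t := by
      rw [ht, Real.exp_sub, Real.exp_log (hp_pos y₁ x), Real.exp_log (hp_pos y₂ x),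
        mul_comm, div_mul_cancel₀ _ (hp_pos y₂ x).ne']
    calc |p y₁ x - p y₂ x| = p y₂ x * |Real.exp t - 1| := by
          rw [hpt, show p y₂ x * Real.exp t - p y₂ x = p y₂ x * (Real.exp t - 1) by ring,
            abs_mul, abs_of_pos (hp_pos y₂ x)]
      _ ≤ p y₂ x * (|t| * Real.exp ((Φ₁ x + 2 * B) * D)) :=
          mul_le_mul_of_nonneg_left hkey (hp_pos y₂ x).le
      _ ≤ p y₂ x * ((Φ₁ x + 2 * B) * Real.exp ((Φ₁ x + 2 * B) * D)) * ‖y₁ - y₂‖ := by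
          have h7 := mul_le_mul_of_nonneg_left htle
            (mul_nonneg (hp_pos y₂ x).le (Real.exp_pos ((Φ₁ x + 2 * B) * D)).le)
          nlinarith [h7]
  -- the dominating integrable function from `hint`
  have hHint := hint (2 * D + 1) (by linarith)
  set H : EuclideanSpace ℝ (Fin d) → ℝ := fun x =>
    (1 + Φ₁ x) * Real.exp ((2 * D + 1) * Φ₁ x - ‖x - proj x‖ ^ 2 / (2 * lam)) * q x ^ α
    with hH_def
  have hsplit : ∀ (c : ℝ) (x : EuclideanSpace ℝ (Fin d)),
      Real.exp (c * Φ₁ x - ‖x - proj x‖ ^ 2 / (2 * lam)) =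
      Real.exp (c * Φ₁ x) * Real.exp (-‖x - proj x‖ ^ 2 / (2 * lam)) := by
    intro c x; rw [← Real.exp_add]; congr 1; ring
  have hHnonneg : ∀ x, 0 ≤ H x := by
    intro x
    have := hΦ₁nonneg x
    have := (Real.rpow_pos_of_pos (hq_pos x) α).le
    have := (Real.exp_pos ((2 * D + 1) * Φ₁ x - ‖x - proj x‖ ^ 2 / (2 * lam))).le
    simp only [hH_def]
    positivity
  -- upper bound for g on K
  have hg_le : ∀ y ∈ K, ∀ x, g y x ≤ M₀ * Real.exp (2 * B * D) * H x := by
    intro y hy x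
    have hA : (0:ℝ) ≤ q x ^ α * Real.exp (-‖x - proj x‖ ^ 2 / (2 * lam)) := by
      have := (Real.rpow_pos_of_pos (hq_pos x) α).le
      positivity
    have hexp1 : Real.exp ((Φ₁ x + 2 * B) * D) =
        Real.exp (2 * B * D) * Real.exp (D * Φ₁ x) := by
      rw [← Real.exp_add]; congr 1; ring
    have hexp2 : Real.exp (D * Φ₁ x) ≤ (1 + Φ₁ x) * Real.exp ((2 * D + 1) * Φ₁ x) := by
      have h1 : Real.exp (D * Φ₁ x) ≤ Real.exp ((2 * D + 1) * Φ₁ x) :=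
        Real.exp_le_exp.2 (by nlinarith [hΦ₁nonneg x])
      nlinarith [Real.exp_pos ((2 * D + 1) * Φ₁ x), hΦ₁nonneg x]
    have h1 : p y x ≤ M₀ * (Real.exp (2 * B * D) * ((1 + Φ₁ x) *
        Real.exp ((2 * D + 1) * Φ₁ x))) := by
      refine (hratio y hy y₀ hy₀ x).trans ?_
      calc p y₀ x * Real.exp ((Φ₁ x + 2 * B) * D)
          ≤ M₀ * Real.exp ((Φ₁ x + 2 * B) * D) :=
            mul_le_mul_of_nonneg_right (hM₀ x) (Real.exp_pos _).le
        _ ≤ M₀ * (Real.exp (2 * B * D) * ((1 + Φ₁ x) * Real.exp ((2 * D + 1) * Φ₁ x))) := by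
            rw [hexp1]
            refine mul_le_mul_of_nonneg_left ?_ hM0pos.le
            exact mul_le_mul_of_nonneg_left hexp2 (Real.exp_pos _).le
    calc g y x = p y x * (q x ^ α * Real.exp (-‖x - proj x‖ ^ 2 / (2 * lam))) := by
          simp only [hg_def]; ring
      _ ≤ (M₀ * (Real.exp (2 * B * D) * ((1 + Φ₁ x) * Real.exp ((2 * D + 1) * Φ₁ x)))) *
            (q x ^ α * Real.exp (-‖x - proj x‖ ^ 2 / (2 * lam))) :=
          mul_le_mul_of_nonneg_right h1 hA
      _ = M₀ * Real.exp (2 * B * D) * H x := by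
          simp only [hH_def, hsplit]; ring
  -- integrability of g on K
  have hgint : ∀ y ∈ K, Integrable (g y) := by
    intro y hy
    refine (hHint.const_mul (M₀ * Real.exp (2 * B * D))).mono'
      (hgcont y).aestronglyMeasurable (Filter.Eventually.of_forall fun x => ?_)
    rw [Real.norm_eq_abs, abs_of_pos (hgpos y x)]
    exact hg_le y hy x
  -- lower bound function and its positive integral
  set ℓ : EuclideanSpace ℝ (Fin d) → ℝ :=
    fun x => Real.exp (-((Φ₁ x + 2 * B) * D)) * g y₀ x with hℓ_def
  have hℓpos : ∀ x, 0 < ℓ x := fun x => mul_pos (Real.exp_pos _) (hgpos y₀ x)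
  have hℓ_le : ∀ y ∈ K, ∀ x, ℓ x ≤ g y x := by
    intro y hy x
    have h1 := hratio y₀ hy₀ y hy x
    have h2 : Real.exp (-((Φ₁ x + 2 * B) * D)) * p y₀ x ≤ p y x := by
      have h3 := mul_le_mul_of_nonneg_left h1 (Real.exp_pos (-((Φ₁ x + 2 * B) * D))).le
      have h4 : Real.exp (-((Φ₁ x + 2 * B) * D)) * Real.exp ((Φ₁ x + 2 * B) * D) = 1 := by
        rw [← Real.exp_add]; simp
      calc Real.exp (-((Φ₁ x + 2 * B) * D)) * p y₀ x
          ≤ Real.exp (-((Φ₁ x + 2 * B) * D)) * (p y x * Real.exp ((Φ₁ x + 2 * B) * D)) := h3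
        _ = p y x := by rw [show Real.exp (-((Φ₁ x + 2 * B) * D)) *
              (p y x * Real.exp ((Φ₁ x + 2 * B) * D)) =
              p y x * (Real.exp (-((Φ₁ x + 2 * B) * D)) * Real.exp ((Φ₁ x + 2 * B) * D)) by ring,
              h4, mul_one]
    have hA : (0:ℝ) ≤ q x ^ α * Real.exp (-‖x - proj x‖ ^ 2 / (2 * lam)) := by
      have := (Real.rpow_pos_of_pos (hq_pos x) α).le
      positivity
    calc ℓ x = (Real.exp (-((Φ₁ x + 2 * B) * D)) * p y₀ x) *
          (q x ^ α * Real.exp (-‖x - proj x‖ ^ 2 / (2 * lam))) := by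
          simp only [hℓ_def, hg_def]; ring
      _ ≤ p y x * (q x ^ α * Real.exp (-‖x - proj x‖ ^ 2 / (2 * lam))) :=
          mul_le_mul_of_nonneg_right h2 hA
      _ = g y x := by simp only [hg_def]; ring
  have hℓcont : Continuous ℓ :=
    (Real.continuous_exp.comp (((hΦ₁cont.add continuous_const).mul continuous_const).neg)).mul
      (hgcont y₀)
  have hℓint : Integrable ℓ := by
    refine (hgint y₀ hy₀).mono' hℓcont.aestronglyMeasurable
      (Filter.Eventually.of_forall fun x => ?_)
    rw [Real.norm_eq_abs, abs_of_pos (hℓpos x)]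
    calc ℓ x = Real.exp (-((Φ₁ x + 2 * B) * D)) * g y₀ x := rfl
      _ ≤ 1 * g y₀ x := mul_le_mul_of_nonneg_right
          (Real.exp_le_one_iff.2 (by nlinarith [hΦ₁nonneg x])) (hgpos y₀ x).le
      _ = g y₀ x := one_mul _
  set Zlb : ℝ := ∫ x, ℓ x with hZlb_def
  have hZlb_pos : 0 < Zlb := by
    rw [hZlb_def, integral_pos_iff_support_of_nonneg (fun x => (hℓpos x).le) hℓint]
    have hsupp : Function.support ℓ = Set.univ :=
      Set.eq_univ_of_forall fun x => (hℓpos x).ne'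
    rw [hsupp]
    exact isOpen_univ.measure_pos volume Set.univ_nonempty
  have hZ_ge : ∀ y ∈ K, Zlb ≤ ∫ x, g y x := fun y hy =>
    integral_mono hℓint (hgint y hy) (hℓ_le y hy)
  -- the Lipschitz dominating function F
  set F : EuclideanSpace ℝ (Fin d) → ℝ := fun x =>
    M₀ * Real.exp (4 * B * D) * ((Φ₁ x + 2 * B) * Real.exp (2 * D * Φ₁ x)) * q x ^ α *
      Real.exp (-‖x - proj x‖ ^ 2 / (2 * lam)) with hF_def
  have hFnonneg : ∀ x, 0 ≤ F x := by
    intro x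
    have h1 := hΦ₁nonneg x
    have h2 := (Real.rpow_pos_of_pos (hq_pos x) α).le
    simp only [hF_def]
    positivity
  have hFcont : Continuous F := by
    refine ((((continuous_const.mul
      (((hΦ₁cont.add continuous_const).mul
        (Real.continuous_exp.comp (continuous_const.mul hΦ₁cont))))).mul hqα)).mul hr_cont)
  have hF_le : ∀ x, F x ≤ M₀ * Real.exp (4 * B * D) * (1 + 2 * B) * H x := by
    intro x
    have h1 : Φ₁ x + 2 * B ≤ (1 + 2 * B) * (1 + Φ₁ x) := by nlinarith [hΦ₁nonneg x]
    have h2 : Real.exp (2 * D * Φ₁ x) ≤ Real.exp ((2 * D + 1) * Φ₁ x) :=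
      Real.exp_le_exp.2 (by nlinarith [hΦ₁nonneg x])
    have h3 : (Φ₁ x + 2 * B) * Real.exp (2 * D * Φ₁ x) ≤
        (1 + 2 * B) * ((1 + Φ₁ x) * Real.exp ((2 * D + 1) * Φ₁ x)) := by
      have := mul_le_mul h1 h2 (Real.exp_pos _).le
        (by nlinarith [hΦ₁nonneg x] : (0:ℝ) ≤ (1 + 2 * B) * (1 + Φ₁ x))
      linarith [this]
    have hA : (0:ℝ) ≤ q x ^ α * Real.exp (-‖x - proj x‖ ^ 2 / (2 * lam)) := by
      have := (Real.rpow_pos_of_pos (hq_pos x) α).le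
      positivity
    have h4 := mul_le_mul_of_nonneg_left h3 (by positivity : (0:ℝ) ≤ M₀ * Real.exp (4 * B * D))
    have h5 := mul_le_mul_of_nonneg_right h4 hA
    calc F x = M₀ * Real.exp (4 * B * D) * ((Φ₁ x + 2 * B) * Real.exp (2 * D * Φ₁ x)) *
          (q x ^ α * Real.exp (-‖x - proj x‖ ^ 2 / (2 * lam))) := by
          simp only [hF_def]; ring
      _ ≤ M₀ * Real.exp (4 * B * D) *
            ((1 + 2 * B) * ((1 + Φ₁ x) * Real.exp ((2 * D + 1) * Φ₁ x))) *
            (q x ^ α * Real.exp (-‖x - proj x‖ ^ 2 / (2 * lam))) := h5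
      _ = M₀ * Real.exp (4 * B * D) * (1 + 2 * B) * H x := by
          simp only [hH_def, hsplit]; ring
  have hFint : Integrable F := by
    refine (hHint.const_mul (M₀ * Real.exp (4 * B * D) * (1 + 2 * B))).mono'
      hFcont.aestronglyMeasurable (Filter.Eventually.of_forall fun x => ?_)
    rw [Real.norm_eq_abs, abs_of_nonneg (hFnonneg x)]
    exact hF_le x
  have hIF : 0 ≤ ∫ x, F x := integral_nonneg hFnonneg
  -- pointwise bound for |g y₁ - g y₂|
  have hgdiff : ∀ y₁ ∈ K, ∀ y₂ ∈ K, ∀ x,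
      |g y₁ x - g y₂ x| ≤ ‖y₁ - y₂‖ * F x := by
    intro y₁ h₁ y₂ h₂ x
    have hA : (0:ℝ) ≤ q x ^ α * Real.exp (-‖x - proj x‖ ^ 2 / (2 * lam)) := by
      have := (Real.rpow_pos_of_pos (hq_pos x) α).le
      positivity
    have h1 := hdiff y₁ h₁ y₂ h₂ x
    have hp2 : p y₂ x ≤ M₀ * Real.exp ((Φ₁ x + 2 * B) * D) :=
      (hratio y₂ h₂ y₀ hy₀ x).trans
        (mul_le_mul_of_nonneg_right (hM₀ x) (Real.exp_pos _).le)
    have hexp : Real.exp ((Φ₁ x + 2 * B) * D) * Real.exp ((Φ₁ x + 2 * B) * D) ≤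
        Real.exp (4 * B * D) * Real.exp (2 * D * Φ₁ x) := by
      rw [← Real.exp_add, ← Real.exp_add]
      exact Real.exp_le_exp.2 (by nlinarith [hΦ₁nonneg x])
    have h2 : |p y₁ x - p y₂ x| ≤
        M₀ * Real.exp (4 * B * D) * ((Φ₁ x + 2 * B) * Real.exp (2 * D * Φ₁ x)) *
          ‖y₁ - y₂‖ := by
      refine h1.trans ?_
      have hb : p y₂ x * ((Φ₁ x + 2 * B) * Real.exp ((Φ₁ x + 2 * B) * D)) ≤
          M₀ * Real.exp (4 * B * D) * ((Φ₁ x + 2 * B) * Real.exp (2 * D * Φ₁ x)) := by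
        have := mul_le_mul_of_nonneg_right hp2
          (mul_nonneg (show (0:ℝ) ≤ Φ₁ x + 2 * B by linarith [hΦ₁nonneg x])
            (Real.exp_pos ((Φ₁ x + 2 * B) * D)).le)
        refine this.trans ?_
        have h5 := mul_le_mul_of_nonneg_left hexp
          (by nlinarith [hΦ₁nonneg x, hM0pos] : (0:ℝ) ≤ M₀ * (Φ₁ x + 2 * B))
        nlinarith [h5]
      exact mul_le_mul_of_nonneg_right hb (norm_nonneg _)
    calc |g y₁ x - g y₂ x| = |p y₁ x - p y₂ x| *
          (q x ^ α * Real.exp (-‖x - proj x‖ ^ 2 / (2 * lam))) := by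
          rw [show g y₁ x - g y₂ x = (p y₁ x - p y₂ x) *
            (q x ^ α * Real.exp (-‖x - proj x‖ ^ 2 / (2 * lam))) by simp only [hg_def]; ring,
            abs_mul, abs_of_nonneg hA]
      _ ≤ (M₀ * Real.exp (4 * B * D) * ((Φ₁ x + 2 * B) * Real.exp (2 * D * Φ₁ x)) *
            ‖y₁ - y₂‖) * (q x ^ α * Real.exp (-‖x - proj x‖ ^ 2 / (2 * lam))) :=
          mul_le_mul_of_nonneg_right h2 hA
      _ = ‖y₁ - y₂‖ * F x := by simp only [hF_def]; ring
  -- final constant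
  refine ⟨2 * (∫ x, F x) / Zlb, div_nonneg (by linarith) hZlb_pos.le, ?_⟩
  intro y₁ hy₁ y₂ hy₂
  have hg₁ := hgint y₁ hy₁
  have hg₂ := hgint y₂ hy₂
  set Z₁ : ℝ := ∫ x, g y₁ x with hZ₁_def
  set Z₂ : ℝ := ∫ x, g y₂ x with hZ₂_def
  have hZ₁ : Zlb ≤ Z₁ := hZ_ge y₁ hy₁
  have hZ₂ : Zlb ≤ Z₂ := hZ_ge y₂ hy₂
  have hZ₁pos : 0 < Z₁ := hZlb_pos.trans_le hZ₁
  have hZ₂pos : 0 < Z₂ := hZlb_pos.trans_le hZ₂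
  -- the L¹ bound on the difference of the unnormalized densities
  have hI : (∫ x, |g y₁ x - g y₂ x|) ≤ ‖y₁ - y₂‖ * ∫ x, F x := by
    rw [← integral_const_mul]
    exact integral_mono (hg₁.sub hg₂).abs (hFint.const_mul _) (hgdiff y₁ hy₁ y₂ hy₂)
  have hI0 : 0 ≤ ∫ x, |g y₁ x - g y₂ x| := integral_nonneg fun x => abs_nonneg _
  have hZdiff : |Z₁ - Z₂| ≤ ∫ x, |g y₁ x - g y₂ x| := by
    rw [hZ₁_def, hZ₂_def, ← integral_sub hg₁ hg₂]
    calc |∫ x, (g y₁ x - g y₂ x)| = ‖∫ x, (g y₁ x - g y₂ x)‖ := (Real.norm_eq_abs _).symm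
      _ ≤ ∫ x, ‖g y₁ x - g y₂ x‖ := norm_integral_le_integral_norm _
      _ = ∫ x, |g y₁ x - g y₂ x| := by simp [Real.norm_eq_abs]
  -- pointwise splitting
  have hpt : ∀ x, |g y₁ x / Z₁ - g y₂ x / Z₂| ≤
      |g y₁ x - g y₂ x| / Z₁ + g y₂ x * (|Z₁ - Z₂| / (Z₁ * Z₂)) := by
    intro x
    have hkey : g y₁ x / Z₁ - g y₂ x / Z₂ =
        (g y₁ x - g y₂ x) / Z₁ + g y₂ x * ((Z₂ - Z₁) / (Z₁ * Z₂)) := by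
      field_simp
      ring
    rw [hkey]
    refine (abs_add_le _ _).trans ?_
    rw [abs_div, abs_of_pos hZ₁pos, abs_mul, abs_of_pos (hgpos y₂ x), abs_div,
      abs_of_pos (mul_pos hZ₁pos hZ₂pos), abs_sub_comm (Z₂) (Z₁)]
  -- integrate the splitting
  have habs : Integrable (fun x => |g y₁ x - g y₂ x|) := (hg₁.sub hg₂).abs
  have hi1 : Integrable (fun x => |g y₁ x - g y₂ x| / Z₁) := habs.div_const Z₁
  have hi2 : Integrable (fun x => g y₂ x * (|Z₁ - Z₂| / (Z₁ * Z₂))) := hg₂.mul_const _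
  have hLHSint : Integrable (fun x => |g y₁ x / Z₁ - g y₂ x / Z₂|) :=
    ((hg₁.div_const Z₁).sub (hg₂.div_const Z₂)).abs
  have hRHSint : Integrable (fun x =>
      |g y₁ x - g y₂ x| / Z₁ + g y₂ x * (|Z₁ - Z₂| / (Z₁ * Z₂))) := hi1.add hi2
  have hmain : (∫ x, |g y₁ x / Z₁ - g y₂ x / Z₂|) ≤
      (∫ x, |g y₁ x - g y₂ x|) / Z₁ + Z₂ * (|Z₁ - Z₂| / (Z₁ * Z₂)) := by
    calc (∫ x, |g y₁ x / Z₁ - g y₂ x / Z₂|)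
        ≤ ∫ x, (|g y₁ x - g y₂ x| / Z₁ + g y₂ x * (|Z₁ - Z₂| / (Z₁ * Z₂))) :=
          integral_mono hLHSint hRHSint hpt
      _ = (∫ x, |g y₁ x - g y₂ x|) / Z₁ + Z₂ * (|Z₁ - Z₂| / (Z₁ * Z₂)) := by
          rw [integral_add hi1 hi2, integral_div, integral_mul_const, ← hZ₂_def]
  have hZ₂term : Z₂ * (|Z₁ - Z₂| / (Z₁ * Z₂)) = |Z₁ - Z₂| / Z₁ := by
    field_simp
  have hfinal : (∫ x, |g y₁ x / Z₁ - g y₂ x / Z₂|) ≤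
      2 * (∫ x, F x) / Zlb * ‖y₁ - y₂‖ := by
    rw [hZ₂term] at hmain
    have h7 : (∫ x, |g y₁ x - g y₂ x|) + |Z₁ - Z₂| ≤ 2 * (‖y₁ - y₂‖ * ∫ x, F x) := by
      linarith [hZdiff, hI]
    calc (∫ x, |g y₁ x / Z₁ - g y₂ x / Z₂|)
        ≤ (∫ x, |g y₁ x - g y₂ x|) / Z₁ + |Z₁ - Z₂| / Z₁ := hmain
      _ = ((∫ x, |g y₁ x - g y₂ x|) + |Z₁ - Z₂|) / Z₁ := (add_div _ _ _).symm
      _ ≤ (2 * (‖y₁ - y₂‖ * ∫ x, F x)) / Zlb :=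
          div_le_div₀ (by nlinarith [hIF, norm_nonneg (y₁ - y₂)]) h7 hZlb_pos hZ₁
      _ = 2 * (∫ x, F x) / Zlb * ‖y₁ - y₂‖ := by ring
  simpa only [hg_def] using hfinal
end
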